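/- For every natural number n ≥ 1 there exists a natural number m (one may take m = 3 for n = 1 and m = n for n ≥ 2) such that every finite 3-uniform hypergraph A in K₀⁺ with exactly n vertices admits an extension C in K₀⁺ (a 3-uniform hypergraph on a vertex set containing that of A, inducing A on it) with |C \ A| = m such that (A, C) is a 0-minimal biminimal pair. -/

import Mathlib

/-- The predimension of the finite vertex set `S` with respect to the hyperedge set `E`:
`δ(S) = |S| - |{e ∈ E : e ⊆ S}|`. -/
def hdelta {α : Type*} [DecidableEq α] (E : Finset (Finset α)) (S : Finset α) : ℤ :=
  (S.card : ℤ) - ((E.filter (fun e => e ⊆ S)).card : ℤ)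

theorem key (VA : Finset ℕ) (EA : Finset (Finset ℕ)) (m : ℕ) (hm : 2 ≤ m)
    (hEA : ∀ e ∈ EA, e.card = 3 ∧ e ⊆ VA)
    (hK : ∀ S ⊆ VA, S.Nonempty → 0 < hdelta EA S)
    (a : Fin m → ℕ) (ha : ∀ i, a i ∈ VA) (hsurj : ∀ x ∈ VA, ∃ i, a i = x)
    (hij : 3 ≤ m ∨ Function.Injective a) :
    ∃ (VC : Finset ℕ) (EC : Finset (Finset ℕ)),
          VA ⊆ VC ∧ (∀ e ∈ EC, e.card = 3 ∧ e ⊆ VC) ∧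
          EC.filter (fun e => e ⊆ VA) = EA ∧
          (VC \ VA).card = m ∧
          (∀ S ⊆ VC, S.Nonempty → 0 < hdelta EC S) ∧
          (∀ C : Finset ℕ, VA ⊆ C → C ⊂ VC →
              ∀ D : Finset ℕ, VA ⊂ D → D ⊆ C → hdelta EC VA < hdelta EC D) ∧
          ¬ (∀ D : Finset ℕ, VA ⊂ D → D ⊆ VC → hdelta EC VA < hdelta EC D) ∧
          hdelta EC VC = hdelta EC VA ∧
          (∀ x ∈ VA, ∃ e ∈ EC, x ∈ e ∧ ∃ v ∈ e, v ∈ VC \ VA) := by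
  haveI : NeZero m := ⟨by omega⟩
  set N := VA.sup id with hN
  set b : Fin m → ℕ := fun i => N + 1 + i.val with hb
  have hbinj : Function.Injective b := by
    intro i j h
    have h' : N + 1 + (i : ℕ) = N + 1 + (j : ℕ) := h
    exact Fin.ext (by omega)
  have hbA : ∀ i, b i ∉ VA := by
    intro i hmem
    have := Finset.le_sup (f := id) hmem
    simp only [id] at this
    simp only [hb] at this
    omega
  set B : Finset ℕ := Finset.univ.image b with hB
  set VC : Finset ℕ := VA ∪ B with hVC
  set edge : Fin m → Finset ℕ := fun i => {a i, b i, b (i+1)} with hedge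
  set newE : Finset (Finset ℕ) := Finset.univ.image edge with hnewE
  set EC : Finset (Finset ℕ) := EA ∪ newE with hEC
  -- basic facts
  have hone : (1 : Fin m) ≠ 0 := by
    have h1 : ((1 : Fin m) : ℕ) = 1 := by
      rw [Fin.val_one']
      exact Nat.mod_eq_of_lt (by omega)
    intro h; rw [h] at h1; simp at h1
  have hne1 : ∀ i : Fin m, i ≠ i + 1 := by
    intro i h
    have := left_eq_add.mp h
    exact hone this
  have hmemB : ∀ i, b i ∈ B := by intro i; simp [hB]
  have hmemVC : ∀ i, b i ∈ VC := by intro i; simp [hVC, hmemB i]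
  have hAVC : VA ⊆ VC := Finset.subset_union_left
  have hedgecard : ∀ i, (edge i).card = 3 := by
    intro i
    have h1 : a i ≠ b i := fun h => hbA i (h ▸ ha i)
    have h2 : a i ≠ b (i+1) := fun h => hbA (i+1) (h ▸ ha i)
    have h3 : b i ≠ b (i+1) := fun h => hne1 i (hbinj h)
    simp [hedge, Finset.card_insert_of_notMem, h1, h2, h3]
  have hedgesub : ∀ i, edge i ⊆ VC := by
    intro i x hx
    simp only [hedge, Finset.mem_insert, Finset.mem_singleton] at hx
    rcases hx with h | h | h
    · exact h ▸ hAVC (ha i)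
    · exact h ▸ hmemVC i
    · exact h ▸ hmemVC (i+1)
  have hedgenotA : ∀ i, ¬ edge i ⊆ VA := by
    intro i h
    exact hbA i (h (by simp [hedge]))
  have hedgeinj : Function.Injective edge := by
    intro i j h
    by_contra hne
    have hbi : b i ∈ edge j := h ▸ (by simp [hedge] : b i ∈ edge i)
    have hbj : b j ∈ edge i := h ▸ (by simp [hedge] : b j ∈ edge j)
    simp only [hedge, Finset.mem_insert, Finset.mem_singleton] at hbi hbj
    have hbi' : i = j + 1 := by
      rcases hbi with h' | h' | h'
      · exact absurd (h' ▸ hbA i) (by simp [ha j])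
      · exact absurd (hbinj h') hne
      · exact hbinj h'
    have hbj' : j = i + 1 := by
      rcases hbj with h' | h' | h'
      · exact absurd (h' ▸ hbA j) (by simp [ha i])
      · exact absurd (hbinj h') (fun hh => hne hh.symm)
      · exact hbinj h'
    rcases hij with hm3 | hainj
    · -- i = j+1, j = i+1 → i = i + 2
      have h12 : i = i + 1 + 1 := hbi'.trans (by rw [hbj'])
      rw [add_assoc] at h12
      have h2 : (1 + 1 : Fin m) = 0 := left_eq_add.mp h12
      have hv : ((1 + 1 : Fin m) : ℕ) = 2 := by
        rw [Fin.val_add, Fin.val_one', Nat.mod_eq_of_lt (show 1 < m by omega)]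
        exact Nat.mod_eq_of_lt (by omega)
      rw [h2] at hv
      simp at hv
    · have hai : a i ∈ edge j := h ▸ (by simp [hedge] : a i ∈ edge i)
      simp only [hedge, Finset.mem_insert, Finset.mem_singleton] at hai
      rcases hai with h' | h' | h'
      · exact hne (hainj h')
      · exact absurd (h' ▸ ha i) (hbA j)
      · exact absurd (h' ▸ ha i) (hbA (j+1))
  have hdisj : Disjoint EA newE := by
    rw [Finset.disjoint_right]
    intro e he heA
    simp only [hnewE, Finset.mem_image, Finset.mem_univ, true_and] at he
    obtain ⟨i, rfl⟩ := he
    exact hedgenotA i (hEA _ heA).2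
  have hdisjAB : Disjoint VA B := by
    rw [Finset.disjoint_right]
    intro x hx hxA
    simp only [hB, Finset.mem_image, Finset.mem_univ, true_and] at hx
    obtain ⟨i, rfl⟩ := hx
    exact hbA i hxA
  have hBcard : B.card = m := by
    rw [hB, Finset.card_image_of_injective _ hbinj, Finset.card_univ, Fintype.card_fin]
  have hVCdiff : VC \ VA = B := by
    apply Finset.Subset.antisymm
    · intro x hx
      rw [Finset.mem_sdiff] at hx
      rcases Finset.mem_union.mp hx.1 with h | h
      · exact absurd h hx.2
      · exact h
    · intro x hx
      rw [Finset.mem_sdiff]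
      exact ⟨Finset.mem_union_right _ hx, Finset.disjoint_right.mp hdisjAB hx⟩
  -- counting
  set cnt : Finset ℕ → ℕ := fun S => (Finset.univ.filter (fun i : Fin m => edge i ⊆ S)).card with hcnt
  have hnewcount : ∀ S, (newE.filter (fun e => e ⊆ S)).card = cnt S := by
    intro S
    rw [hnewE, Finset.filter_image, Finset.card_image_of_injective _ hedgeinj]
  have hL1 : ∀ S, cnt S ≤ (S ∩ B).card := by
    intro S
    apply Finset.card_le_card_of_injOn b
    · intro i hi
      simp only [Finset.mem_coe, Finset.mem_filter, Finset.mem_univ, true_and] at hi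
      exact Finset.mem_inter.mpr ⟨hi (by simp [hedge]), hmemB i⟩
    · exact Function.Injective.injOn hbinj
  have hboundary : ∀ S : Finset ℕ, (∃ j, b j ∉ S) → (∃ j, b j ∈ S) →
      ∃ j : Fin m, b j ∉ S ∧ b (j+1) ∈ S := by
    intro S h1 h2
    by_contra hcon
    push_neg at hcon
    obtain ⟨k, hk⟩ := h1
    open Fin.NatCast in
    have hall : ∀ t : ℕ, b (k + (t : Fin m)) ∉ S := by
      intro t
      induction t with
      | zero => simpa using hk
      | succ t ih =>
        have : ((t + 1 : ℕ) : Fin m) = (t : Fin m) + 1 := by push_cast; ring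
        rw [this, ← add_assoc]
        exact hcon _ ih
    obtain ⟨i, hi⟩ := h2
    have := hall ((i - k : Fin m) : ℕ)
    rw [Fin.cast_val_eq_self, add_comm, sub_add_cancel] at this
    exact this hi
  have hL2 : ∀ S : Finset ℕ, (∃ j, b j ∉ S) → (∃ j, b j ∈ S) →
      cnt S + 1 ≤ (S ∩ B).card := by
    intro S h1 h2
    obtain ⟨j, hj1, hj2⟩ := hboundary S h1 h2
    have hj2' : b (j+1) ∈ S ∩ B := Finset.mem_inter.mpr ⟨hj2, hmemB _⟩
    have : cnt S ≤ ((S ∩ B).erase (b (j+1))).card := by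
      apply Finset.card_le_card_of_injOn (fun i => b (i+1))
      · intro i hi
        simp only [Finset.mem_coe, Finset.mem_filter, Finset.mem_univ, true_and] at hi
        have hiS : b (i+1) ∈ S := hi (by simp [hedge])
        have hine : i ≠ j := by
          intro h; exact hj1 (h ▸ hi (by simp [hedge]))
        refine Finset.mem_erase.mpr ⟨?_, Finset.mem_inter.mpr ⟨hiS, hmemB _⟩⟩
        intro h
        exact hine (add_right_cancel (hbinj h))
      · intro x _ y _ h
        exact add_right_cancel (hbinj h)
    rw [Finset.card_erase_of_mem hj2'] at this
    have : 1 ≤ (S ∩ B).card := Finset.card_pos.mpr ⟨_, hj2'⟩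
    omega
  -- decomposition of hdelta
  have holdfilter : ∀ S : Finset ℕ, EA.filter (fun e => e ⊆ S) = EA.filter (fun e => e ⊆ S ∩ VA) := by
    intro S
    apply Finset.filter_congr
    intro e he
    constructor
    · intro h; exact Finset.subset_inter h (hEA e he).2
    · intro h; exact h.trans Finset.inter_subset_left
  have hdecomp : ∀ S ⊆ VC, hdelta EC S = hdelta EA (S ∩ VA) + ((S ∩ B).card : ℤ) - (cnt S : ℤ) := by
    intro S hS
    have hcardS : S.card = (S ∩ VA).card + (S ∩ B).card := by
      rw [← Finset.card_union_of_disjoint (Finset.disjoint_of_subset_left Finset.inter_subset_right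
        (Finset.disjoint_of_subset_right Finset.inter_subset_right hdisjAB))]
      congr 1
      rw [← Finset.inter_union_distrib_left]
      exact (Finset.inter_eq_left.mpr (hS.trans (by rw [hVC]))).symm
    have hfilter : (EC.filter (fun e => e ⊆ S)).card
        = (EA.filter (fun e => e ⊆ S ∩ VA)).card + cnt S := by
      rw [hEC, Finset.filter_union, Finset.card_union_of_disjoint
        (Finset.disjoint_filter_filter hdisj), holdfilter S, hnewcount S]
    simp only [hdelta, hcardS, hfilter]
    push_cast
    ring
  have hcntVA : cnt VA = 0 := by
    rw [hcnt]
    simp only [Finset.card_eq_zero, Finset.filter_eq_empty_iff]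
    intro i _
    exact hedgenotA i
  have hABempty : VA ∩ B = ∅ := Finset.disjoint_iff_inter_eq_empty.mp hdisjAB
  have hdVA : hdelta EC VA = hdelta EA VA := by
    rw [hdecomp VA hAVC, Finset.inter_self, hcntVA, hABempty]
    simp
  have hdVC : hdelta EC VC = hdelta EC VA := by
    rw [hdVA, hdecomp VC Finset.Subset.rfl]
    have h1 : VC ∩ VA = VA := Finset.inter_eq_right.mpr hAVC
    have h2 : VC ∩ B = B := Finset.inter_eq_right.mpr Finset.subset_union_right
    have h3 : cnt VC = m := by
      have hle : cnt VC ≤ (Finset.univ : Finset (Fin m)).card := Finset.card_filter_le _ _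
      have hge : (Finset.univ : Finset (Fin m)).card ≤ cnt VC :=
        Finset.card_le_card (fun i hi => Finset.mem_filter.mpr ⟨hi, hedgesub i⟩)
      have huniv : (Finset.univ : Finset (Fin m)).card = m := by simp
      omega
    rw [h1, h2, h3, hBcard]; ring
  have hssAB : VA ⊂ VC := (Finset.ssubset_iff_of_subset hAVC).mpr ⟨b 0, hmemVC 0, hbA 0⟩
  refine ⟨VC, EC, hAVC, ?_, ?_, ?_, ?_, ?_, ?_, hdVC, ?_⟩
  · intro e he
    rcases Finset.mem_union.mp he with h | h
    · exact ⟨(hEA e h).1, (hEA e h).2.trans hAVC⟩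
    · obtain ⟨i, _, rfl⟩ := Finset.mem_image.mp h
      exact ⟨hedgecard i, hedgesub i⟩
  · rw [hEC, Finset.filter_union]
    have h1 : EA.filter (fun e => e ⊆ VA) = EA :=
      Finset.filter_true_of_mem (fun e he => (hEA e he).2)
    have h2 : newE.filter (fun e => e ⊆ VA) = ∅ := by
      rw [Finset.filter_eq_empty_iff]
      intro e he
      obtain ⟨i, _, rfl⟩ := Finset.mem_image.mp he
      exact hedgenotA i
    rw [h1, h2, Finset.union_empty]
  · rw [hVCdiff]; exact hBcard
  · intro S hS hSne
    rw [hdecomp S hS]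
    by_cases hSA : (S ∩ VA).Nonempty
    · have h1 := hK (S ∩ VA) Finset.inter_subset_right hSA
      have h2 := hL1 S
      omega
    · have hempty : S ∩ VA = ∅ := Finset.not_nonempty_iff_eq_empty.mp hSA
      have hcnt0 : cnt S = 0 := by
        rw [hcnt]
        simp only [Finset.card_eq_zero, Finset.filter_eq_empty_iff]
        intro i _ hsub
        have hmm : a i ∈ S ∩ VA := Finset.mem_inter.mpr ⟨hsub (by simp [hedge]), ha i⟩
        simp [hempty] at hmm
      have hd0 : hdelta EA (S ∩ VA) = 0 := by
        rw [hempty]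
        unfold hdelta
        have h5 : EA.filter (fun e => e ⊆ (∅ : Finset ℕ)) = ∅ := by
          rw [Finset.filter_eq_empty_iff]
          intro e he hsub
          have h6 := (hEA e he).1
          rw [Finset.subset_empty.mp hsub] at h6
          simp at h6
        rw [h5]
        simp
      have hSB : S ∩ B = S := by
        apply Finset.inter_eq_left.mpr
        intro x hxS
        rcases Finset.mem_union.mp (hS hxS) with h | h
        · exact absurd (Finset.mem_inter.mpr ⟨hxS, h⟩) (by simp [hempty])
        · exact h
      have hpos : 0 < S.card := Finset.card_pos.mpr hSne
      rw [hd0, hSB, hcnt0]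
      omega
  · intro C hC hCVC D hD hDC
    have hDVC : D ⊆ VC := hDC.trans hCVC.subset
    rw [hdVA, hdecomp D hDVC]
    have hDA : D ∩ VA = VA := Finset.inter_eq_right.mpr hD.subset
    rw [hDA]
    have hex1 : ∃ j, b j ∈ D := by
      obtain ⟨x, hxD, hxA⟩ := Finset.exists_of_ssubset hD
      rcases Finset.mem_union.mp (hDVC hxD) with h | h
      · exact absurd h hxA
      · obtain ⟨j, _, rfl⟩ := Finset.mem_image.mp h
        exact ⟨j, hxD⟩
    have hex2 : ∃ j, b j ∉ D := by
      obtain ⟨x, hxVC, hxC⟩ := Finset.exists_of_ssubset hCVC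
      have hxD : x ∉ D := fun hh => hxC (hDC hh)
      rcases Finset.mem_union.mp hxVC with h | h
      · exact absurd (hC h) hxC
      · obtain ⟨j, _, rfl⟩ := Finset.mem_image.mp h
        exact ⟨j, hxD⟩
    have h7 := hL2 D hex2 hex1
    omega
  · intro hcon
    have h8 := hcon VC hssAB Finset.Subset.rfl
    rw [hdVC] at h8
    exact lt_irrefl _ h8
  · intro x hx
    obtain ⟨i, rfl⟩ := hsurj x hx
    refine ⟨edge i, Finset.mem_union_right _ (Finset.mem_image.mpr ⟨i, Finset.mem_univ i, rfl⟩),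
      by simp [hedge], b i, by simp [hedge], ?_⟩
    rw [hVCdiff]; exact hmemB i

/-- For every `n ≥ 1` there is `m` (one may take `m = 3` for `n = 1` and `m = n` for
`n ≥ 2`) such that every finite 3-uniform hypergraph `A = (VA, EA)` in `K₀⁺` with `n`
vertices has an extension `C = (VC, EC)` in `K₀⁺` inducing `A` on `VA`, with
`|VC \ VA| = m`, such that `(VA, VC)` is a 0-minimal biminimal pair. -/
theorem stmt_8 :
    ∀ n : ℕ, 1 ≤ n → ∃ m : ℕ,
      ((n = 1 → m = 3) ∧ (2 ≤ n → m = n)) ∧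
      ∀ (VA : Finset ℕ) (EA : Finset (Finset ℕ)),
        (∀ e ∈ EA, e.card = 3 ∧ e ⊆ VA) → VA.card = n →
        (∀ S ⊆ VA, S.Nonempty → 0 < hdelta EA S) →
        ∃ (VC : Finset ℕ) (EC : Finset (Finset ℕ)),
          -- C is a 3-uniform hypergraph extending A and inducing A on VA
          VA ⊆ VC ∧ (∀ e ∈ EC, e.card = 3 ∧ e ⊆ VC) ∧
          EC.filter (fun e => e ⊆ VA) = EA ∧
          -- exactly m new vertices
          (VC \ VA).card = m ∧
          -- C belongs to K₀⁺
          (∀ S ⊆ VC, S.Nonempty → 0 < hdelta EC S) ∧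
          -- (VA, VC) is a minimal pair:
          (∀ C : Finset ℕ, VA ⊆ C → C ⊂ VC →
              ∀ D : Finset ℕ, VA ⊂ D → D ⊆ C → hdelta EC VA < hdelta EC D) ∧
          ¬ (∀ D : Finset ℕ, VA ⊂ D → D ⊆ VC → hdelta EC VA < hdelta EC D) ∧
          -- 0-minimal: δ(VC/VA) = 0
          hdelta EC VC = hdelta EC VA ∧
          -- biminimal: every vertex of VA lies in a hyperedge meeting VC \ VA
          (∀ a ∈ VA, ∃ e ∈ EC, a ∈ e ∧ ∃ v ∈ e, v ∈ VC \ VA) := by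
  intro n hn
  rcases eq_or_lt_of_le hn with h1 | h2
  · refine ⟨3, ⟨fun _ => rfl, fun h => absurd h1.symm (by omega)⟩, ?_⟩
    intro VA EA hEA hcard hK
    obtain ⟨x, rfl⟩ := Finset.card_eq_one.mp (by omega : VA.card = 1)
    exact key _ EA 3 (by omega) hEA hK (fun _ => x) (fun _ => by simp)
      (fun y hy => ⟨0, (Finset.mem_singleton.mp hy).symm⟩) (Or.inl le_rfl)
  · refine ⟨n, ⟨fun h => absurd h (by omega), fun _ => rfl⟩, ?_⟩
    intro VA EA hEA hcard hK
    exact key VA EA n (by omega) hEA hK (fun i => (VA.orderIsoOfFin hcard i : ℕ))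
      (fun i => (VA.orderIsoOfFin hcard i).2)
      (fun y hy => ⟨(VA.orderIsoOfFin hcard).symm ⟨y, hy⟩, by simp⟩)
      (Or.inr (fun i j h => (VA.orderIsoOfFin hcard).injective (Subtype.ext h)))
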